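/- Let F₁,…,F_k be involutions on S and π a strictly positive density. Define recursively α_k(x) = min(1, (π(F_k(x))/π(x)) · ∏_{i=1}^{k−1} (1 − α_i(F_k(x)))/(1 − α_i(x))), assuming all α_i(x) < 1 and α_i(F_k(x)) < 1 for i < k. Then the k-th stage balance condition π(x)·∏_{i=1}^{k−1}(1 − α_i(x))·α_k(x) = π(F_k(x))·∏_{i=1}^{k−1}(1 − α_i(F_k(x)))·α_k(F_k(x)) holds. -/
import Mathlib


open Finset

/-- k-th stage delayed rejection balance condition for DR-G-HMC: with involutions
F₁, …, F_k, strictly positive density π, and recursively defined acceptance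
probabilities α_i, the k-th stage balance condition holds. -/
theorem delayed_rejection_kth_stage_balance {S : Type*}
    (F : ℕ → S → S) (hF : ∀ i, F i ∘ F i = id)
    (π : S → ℝ) (hπ : ∀ x, 0 < π x)
    (α : ℕ → S → ℝ)
    (hα : ∀ k x, α k x =
      min 1 ((π (F k x) / π x) *
        ∏ i ∈ Finset.Ico 1 k, (1 - α i (F k x)) / (1 - α i x)))
    (k : ℕ) (hk : 1 ≤ k) (x : S)
    (hlt : ∀ i ∈ Finset.Ico 1 k, α i x < 1 ∧ α i (F k x) < 1) :
    π x * (∏ i ∈ Finset.Ico 1 k, (1 - α i x)) * α k x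
      = π (F k x) * (∏ i ∈ Finset.Ico 1 k, (1 - α i (F k x))) * α k (F k x) := by
  set y := F k x with hy
  have hyx : F k y = x := congrFun (hF k) x
  set A := π x * ∏ i ∈ Finset.Ico 1 k, (1 - α i x) with hA
  set B := π y * ∏ i ∈ Finset.Ico 1 k, (1 - α i y) with hB
  have hApos : 0 < A := mul_pos (hπ x) (Finset.prod_pos fun i hi => by
    linarith [(hlt i hi).1])
  have hBpos : 0 < B := mul_pos (hπ y) (Finset.prod_pos fun i hi => by
    linarith [(hlt i hi).2])
  have hprod : ∀ u v : S, (π (u) / π (v)) *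
      ∏ i ∈ Finset.Ico 1 k, (1 - α i u) / (1 - α i v)
      = (π u * ∏ i ∈ Finset.Ico 1 k, (1 - α i u)) /
        (π v * ∏ i ∈ Finset.Ico 1 k, (1 - α i v)) := by
    intro u v
    rw [Finset.prod_div_distrib, div_mul_div_comm]
  have hax : α k x = min 1 (B / A) := by
    rw [hα k x, ← hy, hprod]
  have hay : α k y = min 1 (A / B) := by
    rw [hα k y, hyx, hprod]
  rw [hax, hay, mul_min_of_nonneg _ _ hApos.le,
    mul_min_of_nonneg _ _ hBpos.le, mul_one, mul_one,
    mul_div_cancel₀ _ hApos.ne', mul_div_cancel₀ _ hBpos.ne', min_comm]
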